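/- Let M be a commutative monoid (written additively) and let G ⊆ M be the submonoid consisting of all invertible elements of M. Assume that the translation action of G on M is free, i.e., for g ∈ G and m ∈ M, g + m = m implies g = 0, and assume that the quotient monoid M/G is finitely generated. Then there exists a finitely generated submonoid P ⊆ M such that the composite P ↪ M → M/G is surjective and induces an isomorphism P/(P ∩ G) ≅ M/G. -/

import Mathlib

universe u v

set_option linter.unusedSectionVars false

namespace Chart7

variable {M : Type u} [AddCommMonoid M]

lemma exists_neg (G : AddSubmonoid M) (hG : ∀ m : M, m ∈ G ↔ IsAddUnit m)
    {g : M} (hg : g ∈ G) : ∃ g' ∈ G, g + g' = 0 := by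
  obtain ⟨v, rfl⟩ := (hG g).mp hg
  exact ⟨↑(-v), (hG _).mpr (-v).isAddUnit, v.add_neg⟩

/-- The congruence `x ~ y ↔ ∃ g ∈ G, x + g = y`. -/
def unitCon (G : AddSubmonoid M) (hG : ∀ m : M, m ∈ G ↔ IsAddUnit m) : AddCon M :=
  ⟨⟨fun a b => ∃ g ∈ G, a + g = b,
    ⟨fun a => ⟨0, zero_mem _, add_zero a⟩,
     by
      rintro a b ⟨g, hg, rfl⟩
      obtain ⟨g', hg', h0⟩ := exists_neg G hG hg
      exact ⟨g', hg', by rw [add_assoc, h0, add_zero]⟩,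
     by
      rintro a b c ⟨g, hg, rfl⟩ ⟨g', hg', rfl⟩
      exact ⟨g + g', add_mem hg hg', by rw [add_assoc]⟩⟩⟩,
   by
    rintro a b x y ⟨g, hg, rfl⟩ ⟨g', hg', rfl⟩
    exact ⟨g + g', add_mem hg hg', by abel⟩⟩

lemma conGen_iff (G : AddSubmonoid M) (hG : ∀ m : M, m ∈ G ↔ IsAddUnit m) (x y : M) :
    addConGen (fun x y : M => x ∈ G ∧ y = 0) x y ↔ ∃ g ∈ G, x + g = y := by
  constructor
  · intro h
    refine AddCon.le_def.mp ((AddCon.addConGen_le (c := unitCon G hG)).mpr ?_) h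
    rintro a b ⟨ha, rfl⟩
    obtain ⟨g', hg', h0⟩ := exists_neg G hG ha
    exact ⟨g', hg', h0⟩
  · rintro ⟨g, hg, rfl⟩
    have h1 : addConGen (fun x y : M => x ∈ G ∧ y = 0) g 0 :=
      AddConGen.Rel.of g 0 ⟨hg, rfl⟩
    have h2 := (addConGen _).add ((addConGen _).refl x) h1
    rw [add_zero] at h2
    exact (addConGen _).symm h2

lemma unique_g (G : AddSubmonoid M) (hG : ∀ m : M, m ∈ G ↔ IsAddUnit m)
    (hfree : ∀ g ∈ G, ∀ m : M, g + m = m → g = 0)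
    {x g g' : M} (hg : g ∈ G) (hg' : g' ∈ G) (h : x + g = x + g') : g = g' := by
  obtain ⟨k, hkG, hk0⟩ := exists_neg G hG hg'
  have key : (g + k) + (g' + x) = g' + x := by
    have hgx : g + x = g' + x := by rw [add_comm g x, add_comm g' x, h]
    calc (g + k) + (g' + x) = (g + x) + (g' + k) := by abel
    _ = g + x := by rw [hk0, add_zero]
    _ = g' + x := hgx
  have hz : g + k = 0 := hfree _ (add_mem hg hkG) _ key
  calc g = g + (g' + k) := by rw [hk0, add_zero]
  _ = (g + k) + g' := by abel
  _ = g' := by rw [hz, zero_add]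

section F

variable {α : Type v} [Fintype α] (w : α → M)

/-- Evaluation of an exponent vector. -/
def F (a : α → ℕ) : M := ∑ i, a i • w i

lemma F_zero : F w 0 = 0 := by simp [F]

lemma F_add (a b : α → ℕ) : F w (a + b) = F w a + F w b := by
  simp [F, add_nsmul, Finset.sum_add_distrib]

lemma F_nsmul (n : ℕ) (a : α → ℕ) : F w (n • a) = n • F w a := by
  simp [F, Finset.smul_sum, smul_smul, Nat.mul_comm]

lemma F_single [DecidableEq α] (i : α) : F w (Pi.single i 1) = w i := by
  rw [F, Finset.sum_eq_single i]
  · simp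
  · intro j _ hj; simp [Pi.single_eq_of_ne hj]
  · intro h; exact absurd (Finset.mem_univ i) h

/-- embedding of ℕ-vector pairs into ℤ-vector pairs -/
def eZ (p : (α → ℕ) × (α → ℕ)) : (α → ℤ) × (α → ℤ) :=
  (fun i => (p.1 i : ℤ), fun i => (p.2 i : ℤ))

lemma eZ_zero : eZ (0 : (α → ℕ) × (α → ℕ)) = 0 := by
  simp [eZ]; rfl

lemma eZ_add (p q : (α → ℕ) × (α → ℕ)) : eZ (p + q) = eZ p + eZ q := by
  simp only [eZ, Prod.mk_add_mk, Prod.ext_iff]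
  constructor <;> funext i <;> simp

lemma eZ_nsmul (n : ℕ) (p : (α → ℕ) × (α → ℕ)) : eZ (n • p) = (n : ℤ) • eZ p := by
  simp only [eZ, Prod.ext_iff, Prod.smul_fst, Prod.smul_snd]
  constructor <;> funext i <;> simp

lemma eZ_inj : Function.Injective (eZ (α := α)) := by
  rintro ⟨a, b⟩ ⟨a', b'⟩ h
  simp only [eZ, Prod.ext_iff] at h ⊢
  obtain ⟨h1, h2⟩ := h
  constructor <;> funext i
  · exact_mod_cast congrFun h1 i
  · exact_mod_cast congrFun h2 i

end F

lemma mem_span_diff {β : Type v} [AddCommGroup β] {SZ : Set β}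
    (h0 : (0 : β) ∈ SZ) (hadd : ∀ x ∈ SZ, ∀ y ∈ SZ, x + y ∈ SZ)
    (hsmul : ∀ (n : ℕ), ∀ x ∈ SZ, n • x ∈ SZ) :
    ∀ x ∈ Submodule.span ℤ SZ, ∃ s ∈ SZ, ∃ t ∈ SZ, x = s - t := by
  intro x hx
  induction hx using Submodule.span_induction with
  | mem x h => exact ⟨x, h, 0, h0, by simp⟩
  | zero => exact ⟨0, h0, 0, h0, by simp⟩
  | add x y _ _ ihx ihy =>
    obtain ⟨s, hs, t, ht, rfl⟩ := ihx
    obtain ⟨s', hs', t', ht', rfl⟩ := ihy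
    exact ⟨s + s', hadd _ hs _ hs', t + t', hadd _ ht _ ht', by abel⟩
  | smul a x _ ih =>
    obtain ⟨s, hs, t, ht, rfl⟩ := ih
    rcases a with n | n
    · exact ⟨n • s, hsmul n _ hs, n • t, hsmul n _ ht, by
        simp [Int.ofNat_eq_coe, natCast_zsmul, smul_sub]⟩
    · exact ⟨(n + 1) • t, hsmul _ _ ht, (n + 1) • s, hsmul _ _ hs, by
        rw [negSucc_zsmul, smul_sub]; abel⟩

end Chart7
/-- Let `M` be a commutative monoid (written additively) and `G ⊆ M`
the submonoid of invertible elements.  If the translation action of `G` on `M` is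
free and the quotient monoid `M/G` (the quotient of `M` by the congruence generated
by the pairs `(g, 0)` for `g ∈ G`) is finitely generated, then there is a finitely
generated submonoid `P ⊆ M` such that the composite `P ↪ M → M/G` is surjective and
the induced homomorphism `P/(P ∩ G) → M/G` is an isomorphism. -/
theorem exists_fg_submonoid_chart {M : Type u} [AddCommMonoid M]
    (G : AddSubmonoid M) (hG : ∀ m : M, m ∈ G ↔ IsAddUnit m)
    (hfree : ∀ g ∈ G, ∀ m : M, g + m = m → g = 0)
    (hfg : AddMonoid.FG (addConGen (fun x y : M => x ∈ G ∧ y = 0)).Quotient) :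
    ∃ P : AddSubmonoid M, P.FG ∧
      Function.Surjective
        ((addConGen (fun x y : M => x ∈ G ∧ y = 0)).mk'.comp P.subtype) ∧
      ∃ h : addConGen (fun x y : ↥P => (x : M) ∈ G ∧ y = 0) ≤
          AddCon.ker ((addConGen (fun x y : M => x ∈ G ∧ y = 0)).mk'.comp P.subtype),
        Function.Bijective
          ((addConGen (fun x y : ↥P => (x : M) ∈ G ∧ y = 0)).lift
            ((addConGen (fun x y : M => x ∈ G ∧ y = 0)).mk'.comp P.subtype) h) := by
  classical
  set cM := addConGen (fun x y : M => x ∈ G ∧ y = 0) with hcM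
  obtain ⟨Qs, hQs⟩ := hfg.fg_top
  -- lift the generators of the quotient
  have hw0 : ∀ q : ↥Qs, ∃ m : M, cM.mk' m = ↑q := fun q => AddCon.mk'_surjective _
  choose w hw using hw0
  -- the submonoid of pairs of exponent vectors whose values differ by a unit
  set S : Set ((↥Qs → ℕ) × (↥Qs → ℕ)) :=
    {p | ∃ g ∈ G, Chart7.F w p.1 + g = Chart7.F w p.2} with hSdef
  have hS0 : (0 : (↥Qs → ℕ) × (↥Qs → ℕ)) ∈ S :=
    ⟨0, zero_mem _, by simp [Chart7.F_zero]⟩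
  have hSadd : ∀ p ∈ S, ∀ q ∈ S, p + q ∈ S := by
    rintro p ⟨g, hg, e1⟩ q ⟨g', hg', e2⟩
    refine ⟨g + g', add_mem hg hg', ?_⟩
    show Chart7.F w (p + q).1 + (g + g') = Chart7.F w (p + q).2
    rw [Prod.fst_add, Prod.snd_add, Chart7.F_add, Chart7.F_add, ← e1, ← e2]
    abel
  have hSnsmul : ∀ (n : ℕ), ∀ p ∈ S, n • p ∈ S := by
    rintro n p ⟨g, hg, e1⟩
    refine ⟨n • g, G.nsmul_mem hg n, ?_⟩
    show Chart7.F w (n • p).1 + n • g = Chart7.F w (n • p).2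
    rw [Prod.smul_fst, Prod.smul_snd, Chart7.F_nsmul, Chart7.F_nsmul, ← smul_add, e1]
  -- the unit associated to each element of S
  have hu0 : ∀ p ∈ S, ∃ g, g ∈ G ∧ Chart7.F w p.1 + g = Chart7.F w p.2 := by
    rintro p ⟨g, hg, e1⟩; exact ⟨g, hg, e1⟩
  choose uu huG huF using hu0
  have u_zero : uu 0 hS0 = 0 := by
    have h1 : Chart7.F w (0 : (↥Qs → ℕ) × (↥Qs → ℕ)).1 + (0 : M)
        = Chart7.F w (0 : (↥Qs → ℕ) × (↥Qs → ℕ)).2 := by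
      simp [Chart7.F_zero]
    exact Chart7.unique_g G hG hfree (huG _ hS0) (zero_mem G) ((huF _ hS0).trans h1.symm)
  have u_add : ∀ p q (hp : p ∈ S) (hq : q ∈ S) (hpq : p + q ∈ S),
      uu (p + q) hpq = uu p hp + uu q hq := by
    intro p q hp hq hpq
    have h1 : Chart7.F w (p + q).1 + (uu p hp + uu q hq) = Chart7.F w (p + q).2 := by
      rw [Prod.fst_add, Prod.snd_add, Chart7.F_add, Chart7.F_add, ← huF p hp, ← huF q hq]
      abel
    exact Chart7.unique_g G hG hfree (huG _ hpq)
      (add_mem (huG _ hp) (huG _ hq)) ((huF _ hpq).trans h1.symm)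
  have u_nsmul : ∀ (n : ℕ) p (hp : p ∈ S) (h2 : n • p ∈ S),
      uu (n • p) h2 = n • uu p hp := by
    intro n p hp h2
    have h1 : Chart7.F w (n • p).1 + n • uu p hp = Chart7.F w (n • p).2 := by
      rw [Prod.smul_fst, Prod.smul_snd, Chart7.F_nsmul, Chart7.F_nsmul, ← huF p hp, smul_add]
    exact Chart7.unique_g G hG hfree (huG _ h2)
      (G.nsmul_mem (huG _ hp) n) ((huF _ h2).trans h1.symm)
  -- the span of the image of S in the integral lattice is finitely generated
  obtain ⟨V, hV⟩ : (Submodule.span ℤ (Chart7.eZ '' S)).FG := IsNoetherian.noetherian _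
  have hdecV : ∀ v : ↥V, ∃ s ∈ S, ∃ t ∈ S,
      (v : (↥Qs → ℤ) × (↥Qs → ℤ)) = Chart7.eZ s - Chart7.eZ t := by
    intro v
    have hv : (v : (↥Qs → ℤ) × (↥Qs → ℤ)) ∈ Submodule.span ℤ (Chart7.eZ '' S) := by
      rw [← hV]; exact Submodule.subset_span v.2
    have h0' : (0 : (↥Qs → ℤ) × (↥Qs → ℤ)) ∈ Chart7.eZ '' S := ⟨0, hS0, Chart7.eZ_zero⟩
    have hadd' : ∀ x ∈ Chart7.eZ '' S, ∀ y ∈ Chart7.eZ '' S, x + y ∈ Chart7.eZ '' S := by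
      rintro x ⟨p, hp, rfl⟩ y ⟨q, hq, rfl⟩
      exact ⟨p + q, hSadd p hp q hq, Chart7.eZ_add p q⟩
    have hsmul' : ∀ (n : ℕ), ∀ x ∈ Chart7.eZ '' S, n • x ∈ Chart7.eZ '' S := by
      rintro n x ⟨p, hp, rfl⟩
      exact ⟨n • p, hSnsmul n p hp, by rw [Chart7.eZ_nsmul, natCast_zsmul]⟩
    obtain ⟨s', ⟨s, hs, rfl⟩, t', ⟨t, ht, rfl⟩, h⟩ :=
      Chart7.mem_span_diff h0' hadd' hsmul' _ hv
    exact ⟨s, hs, t, ht, h⟩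
  choose σ hσ τ hτ hστ using hdecV
  -- a total "negation" function on G
  have hnn0 : ∀ g : M, ∃ g', g ∈ G → (g' ∈ G ∧ g + g' = 0) := by
    intro g
    by_cases h : g ∈ G
    · obtain ⟨g', hg', h0⟩ := Chart7.exists_neg G hG h
      exact ⟨g', fun _ => ⟨hg', h0⟩⟩
    · exact ⟨0, fun h' => absurd h' h⟩
  choose nneg hnneg using hnn0
  -- the finite set of units to adjoin
  set T0 : Set M := (Set.range fun v : ↥V => uu (σ v) (hσ v)) ∪
    (Set.range fun v : ↥V => uu (τ v) (hτ v)) with hT0def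
  set T : Set M := T0 ∪ nneg '' T0 with hTdef
  have hT0fin : T0.Finite := (Set.finite_range _).union (Set.finite_range _)
  have hTfin : T.Finite := hT0fin.union (hT0fin.image _)
  have hT0G : T0 ⊆ ↑G := by
    rintro x (⟨v, rfl⟩ | ⟨v, rfl⟩) <;> exact huG _ _
  have hTG : T ⊆ ↑G := by
    rintro x (hx | ⟨y, hy, rfl⟩)
    · exact hT0G hx
    · exact (hnneg y (hT0G hy)).1
  set H0 := AddSubmonoid.closure T0 with hH0def
  set H := AddSubmonoid.closure T with hHdef
  have hH0H : H0 ≤ H := AddSubmonoid.closure_mono Set.subset_union_left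
  have hHG : ∀ x ∈ H, x ∈ G := fun x hx => AddSubmonoid.closure_le.mpr hTG hx
  have hH0inv : ∀ x ∈ H0, ∃ y ∈ H, x + y = 0 := by
    intro x hx
    induction hx using AddSubmonoid.closure_induction with
    | mem t ht =>
      exact ⟨nneg t, AddSubmonoid.subset_closure (Or.inr ⟨t, ht, rfl⟩),
        (hnneg t (hT0G ht)).2⟩
    | zero => exact ⟨0, zero_mem _, add_zero 0⟩
    | add x y hx hy ihx ihy =>
      obtain ⟨a, haH, ha0⟩ := ihx
      obtain ⟨b, hbH, hb0⟩ := ihy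
      refine ⟨a + b, add_mem haH hbH, ?_⟩
      calc x + y + (a + b) = (x + a) + (y + b) := by abel
      _ = 0 := by rw [ha0, hb0, add_zero]
  -- key: every unit coming from S lies in H
  have hQspan : ∀ x ∈ Submodule.span ℤ (↑V : Set ((↥Qs → ℤ) × (↥Qs → ℤ))),
      ∃ A, ∃ hA : A ∈ S, ∃ B, ∃ hB : B ∈ S,
        x = Chart7.eZ B - Chart7.eZ A ∧ uu A hA ∈ H0 ∧ uu B hB ∈ H0 := by
    intro x hx
    induction hx using Submodule.span_induction with
    | mem v hv =>
      refine ⟨τ ⟨v, hv⟩, hτ _, σ ⟨v, hv⟩, hσ _, hστ ⟨v, hv⟩, ?_, ?_⟩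
      · exact AddSubmonoid.subset_closure (Or.inr ⟨⟨v, hv⟩, rfl⟩)
      · exact AddSubmonoid.subset_closure (Or.inl ⟨⟨v, hv⟩, rfl⟩)
    | zero =>
      refine ⟨0, hS0, 0, hS0, by rw [Chart7.eZ_zero, sub_zero], ?_, ?_⟩ <;>
        rw [u_zero] <;> exact zero_mem _
    | add x y hx hy ihx ihy =>
      obtain ⟨A, hA, B, hB, hEq, hAH, hBH⟩ := ihx
      obtain ⟨A', hA', B', hB', hEq', hAH', hBH'⟩ := ihy
      refine ⟨A + A', hSadd _ hA _ hA', B + B', hSadd _ hB _ hB', ?_, ?_, ?_⟩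
      · rw [Chart7.eZ_add, Chart7.eZ_add, hEq, hEq']; abel
      · rw [u_add _ _ hA hA']; exact add_mem hAH hAH'
      · rw [u_add _ _ hB hB']; exact add_mem hBH hBH'
    | smul a x hx ih =>
      obtain ⟨A, hA, B, hB, hEq, hAH, hBH⟩ := ih
      rcases a with n | n
      · refine ⟨n • A, hSnsmul n _ hA, n • B, hSnsmul n _ hB, ?_, ?_, ?_⟩
        · rw [Chart7.eZ_nsmul, Chart7.eZ_nsmul, hEq, Int.ofNat_eq_coe, smul_sub]
        · rw [u_nsmul n _ hA]; exact AddSubmonoid.nsmul_mem _ hAH n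
        · rw [u_nsmul n _ hB]; exact AddSubmonoid.nsmul_mem _ hBH n
      · refine ⟨(n + 1) • B, hSnsmul _ _ hB, (n + 1) • A, hSnsmul _ _ hA, ?_, ?_, ?_⟩
        · have hns : (Int.negSucc n) • x = -((((n + 1) : ℕ) : ℤ) • x) := by
            rw [negSucc_zsmul, natCast_zsmul]
          rw [Chart7.eZ_nsmul, Chart7.eZ_nsmul, hns, hEq, smul_sub, neg_sub]
        · rw [u_nsmul _ _ hB]; exact AddSubmonoid.nsmul_mem _ hBH _
        · rw [u_nsmul _ _ hA]; exact AddSubmonoid.nsmul_mem _ hAH _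
  have hkey : ∀ p (hp : p ∈ S), uu p hp ∈ H := by
    intro p hp
    have hmem : Chart7.eZ p ∈ Submodule.span ℤ (↑V : Set ((↥Qs → ℤ) × (↥Qs → ℤ))) := by
      rw [hV]; exact Submodule.subset_span ⟨p, hp, rfl⟩
    obtain ⟨A, hA, B, hB, hEq, hAH, hBH⟩ := hQspan _ hmem
    have hpA : p + A = B := Chart7.eZ_inj (by rw [Chart7.eZ_add, hEq]; abel)
    have hsum : uu p hp + uu A hA = uu B hB := by
      have h1 : Chart7.F w B.1 + (uu p hp + uu A hA) = Chart7.F w B.2 := by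
        rw [← hpA, Prod.fst_add, Prod.snd_add, Chart7.F_add, Chart7.F_add,
          ← huF p hp, ← huF A hA]
        abel
      exact Chart7.unique_g G hG hfree (add_mem (huG _ hp) (huG _ hA)) (huG _ hB)
        (h1.trans (huF B hB).symm)
    obtain ⟨y, hyH, hy0⟩ := hH0inv _ hAH
    have hrw : uu p hp = uu B hB + y := by
      calc uu p hp = uu p hp + (uu A hA + y) := by rw [hy0, add_zero]
      _ = (uu p hp + uu A hA) + y := by rw [add_assoc]
      _ = uu B hB + y := by rw [hsum]
    rw [hrw]
    exact add_mem (hH0H hBH) hyH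
  -- the chart submonoid
  set P : AddSubmonoid M := AddSubmonoid.closure (Set.range w ∪ T) with hPdef
  have hPfg : P.FG := (AddSubmonoid.fg_iff P).mpr
    ⟨Set.range w ∪ T, rfl, (Set.finite_range w).union hTfin⟩
  have hHP : H ≤ P := AddSubmonoid.closure_mono Set.subset_union_right
  have hwP : ∀ i, w i ∈ P := fun i =>
    AddSubmonoid.subset_closure (Or.inl (Set.mem_range_self i))
  have hdecomp : ∀ x ∈ P, ∃ a, ∃ g ∈ H, x = Chart7.F w a + g := by
    intro x hx
    induction hx using AddSubmonoid.closure_induction with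
    | mem x hx =>
      rcases hx with ⟨i, rfl⟩ | ht
      · exact ⟨Pi.single i 1, 0, zero_mem _, by rw [Chart7.F_single, add_zero]⟩
      · exact ⟨0, x, AddSubmonoid.subset_closure ht, by rw [Chart7.F_zero, zero_add]⟩
    | zero => exact ⟨0, 0, zero_mem _, by rw [Chart7.F_zero, add_zero]⟩
    | add x y hx hy ihx ihy =>
      obtain ⟨a, g, hgH, rfl⟩ := ihx
      obtain ⟨b, g', hg'H, rfl⟩ := ihy
      exact ⟨a + b, g + g', add_mem hgH hg'H, by rw [Chart7.F_add]; abel⟩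
  -- surjectivity
  have hsurj : Function.Surjective (cM.mk'.comp P.subtype) := by
    intro q
    obtain ⟨m, rfl⟩ := AddCon.mk'_surjective q
    have hle : AddSubmonoid.closure (↑Qs : Set cM.Quotient) ≤ AddSubmonoid.map cM.mk' P := by
      rw [AddSubmonoid.closure_le]
      rintro q' hq'
      exact ⟨w ⟨q', hq'⟩, hwP _, hw ⟨q', hq'⟩⟩
    have hm : cM.mk' m ∈ AddSubmonoid.map cM.mk' P := hle (by rw [hQs]; trivial)
    obtain ⟨p, hpP, hpm⟩ := hm
    exact ⟨⟨p, hpP⟩, hpm⟩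
  -- the congruence comparison
  set d := addConGen (fun x y : ↥P => (x : M) ∈ G ∧ y = 0) with hddef
  have hker : d ≤ AddCon.ker (cM.mk'.comp P.subtype) := by
    apply AddCon.addConGen_le.mpr
    rintro x y ⟨hxG, rfl⟩
    rw [AddCon.ker_rel]
    show cM.mk' ↑x = cM.mk' ↑(0 : ↥P)
    rw [ZeroMemClass.coe_zero]
    exact (AddCon.eq cM).mpr (AddConGen.Rel.of _ _ ⟨hxG, rfl⟩)
  refine ⟨P, hPfg, hsurj, hker, ?_, ?_⟩
  · -- injectivity
    intro x y hxy
    obtain ⟨px, rfl⟩ := AddCon.mk'_surjective x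
    obtain ⟨py, rfl⟩ := AddCon.mk'_surjective y
    rw [AddCon.lift_mk', AddCon.lift_mk'] at hxy
    have hxy' : cM.mk' (↑px : M) = cM.mk' (↑py : M) := hxy
    have hc : cM (↑px : M) (↑py : M) := (AddCon.eq cM).mp hxy'
    obtain ⟨g, hgG, hgsum⟩ := (Chart7.conGen_iff G hG _ _).mp hc
    obtain ⟨a, gx, hgxH, hax⟩ := hdecomp _ px.2
    obtain ⟨b, gy, hgyH, hby⟩ := hdecomp _ py.2
    have hyG : gy ∈ G := hHG _ hgyH
    have habS : (a, b) ∈ S := by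
      refine ⟨gx + g + nneg gy, add_mem (add_mem (hHG _ hgxH) hgG) (hnneg gy hyG).1, ?_⟩
      show Chart7.F w a + (gx + g + nneg gy) = Chart7.F w b
      calc Chart7.F w a + (gx + g + nneg gy)
          = ((Chart7.F w a + gx) + g) + nneg gy := by abel
      _ = (↑py : M) + nneg gy := by rw [← hax, hgsum]
      _ = Chart7.F w b + (gy + nneg gy) := by rw [hby]; abel
      _ = Chart7.F w b := by rw [(hnneg gy hyG).2, add_zero]
    have hvH : uu (a, b) habS ∈ H := hkey _ habS
    have hvF : Chart7.F w a + uu (a, b) habS = Chart7.F w b := huF _ habS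
    have hmem1 : uu (a, b) habS + gy ∈ P := hHP (add_mem hvH hgyH)
    have hmem1G : uu (a, b) habS + gy ∈ G := add_mem (hHG _ hvH) hyG
    have hmem2 : gx ∈ P := hHP hgxH
    have hdstep : ∀ (z h : ↥P), (h : M) ∈ G → d (z + h) z := by
      intro z h hh
      have h1 : d h 0 := AddConGen.Rel.of _ _ ⟨hh, rfl⟩
      have h2 := d.add (d.refl z) h1
      rwa [add_zero] at h2
    have heq : px + ⟨uu (a, b) habS + gy, hmem1⟩ = py + (⟨gx, hmem2⟩ : ↥P) := by
      apply Subtype.ext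
      show (↑px : M) + (uu (a, b) habS + gy) = ↑py + gx
      rw [hax, hby]
      calc Chart7.F w a + gx + (uu (a, b) habS + gy)
          = (Chart7.F w a + uu (a, b) habS) + (gx + gy) := by abel
      _ = Chart7.F w b + (gx + gy) := by rw [hvF]
      _ = Chart7.F w b + gy + gx := by abel
    have d1 := hdstep px ⟨uu (a, b) habS + gy, hmem1⟩ hmem1G
    have d2 : d (px + ⟨uu (a, b) habS + gy, hmem1⟩) py := by
      rw [heq]; exact hdstep py ⟨gx, hmem2⟩ (hHG _ hgxH)
    exact (AddCon.eq d).mpr (d.trans (d.symm d1) d2)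
  · -- surjectivity of the lift
    intro q
    obtain ⟨p, hp⟩ := hsurj q
    exact ⟨d.mk' p, by rw [AddCon.lift_mk']; exact hp⟩
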